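/- arXiv:2206.09740 — 3 statements merged into one kernel-verified Lean document; each statement's English description precedes it below -/
import Mathlib

section
/- Let P be a finite point set in ℂ and let C₁, C₂ > 0. Let S ⊆ SE₂(ℝ) be a finite set such that every θ ∈ S satisfies |P ∩ θ·P| ≥ C₁|P|, and suppose there is g ∈ Aff(ℂ) with |gU₀ ∩ S| ≥ C₂|P| > 0. Then E₊(P) ≥ C₂C₁³|P|³. -/
open scoped Classical

noncomputable section

/-- Multiplication in the affine group `Aff(ℂ) = ℂ* ⋉ ℂ`, represented as pairs. -/
def aMul (g h : ℂ × ℂ) : ℂ × ℂ := (g.1 * h.1, g.1 * h.2 + g.2)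

/-- Inverse in the affine group. -/
def aInv (g : ℂ × ℂ) : ℂ × ℂ := (g.1⁻¹, -(g.2 / g.1))

/-- Action of the affine group on ℂ : `(a,b)·z = a z + b`. -/
def aAct (g : ℂ × ℂ) (z : ℂ) : ℂ := g.1 * z + g.2

/-- The group of rigid motions `SE₂(ℝ) = {(a,b) : |a| = 1}`. -/
def SE2 : Set (ℂ × ℂ) := {g | ‖g.1‖ = 1}

/-- The affine group `Aff(ℂ)`: pairs `(a,b)` with `a ≠ 0`. -/
def affG : Set (ℂ × ℂ) := {g | g.1 ≠ 0}

/-- The unipotent subgroup `U₀ = {(1,z) : z ∈ ℂ}`. -/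
def U0 : Set (ℂ × ℂ) := {g | g.1 = 1}

/-- The stabilizer `T(z)` of `z` in the affine group. -/
def stab (z : ℂ) : Set (ℂ × ℂ) := {g | g.1 ≠ 0 ∧ aAct g z = z}

/-- The set of congruence classes of triangles determined by `P`. -/
def triangleSet (P : Finset ℂ) : Set (ℝ × ℝ × ℝ) :=
  {x | ∃ p ∈ P, ∃ q ∈ P, ∃ r ∈ P,
    x = (‖p - q‖, ‖q - r‖, ‖p - r‖)}

/-- The triangle energy `E_T(P)`. -/
def Etri (P : Finset ℂ) : ℕ :=
  Set.ncard {x : (ℂ × ℂ × ℂ) × (ℂ × ℂ × ℂ) |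
    x.1.1 ∈ P ∧ x.1.2.1 ∈ P ∧ x.1.2.2 ∈ P ∧ x.2.1 ∈ P ∧ x.2.2.1 ∈ P ∧ x.2.2.2 ∈ P ∧
    ‖x.1.1 - x.1.2.1‖ = ‖x.2.1 - x.2.2.1‖ ∧
    ‖x.1.2.1 - x.1.2.2‖ = ‖x.2.2.1 - x.2.2.2‖ ∧
    ‖x.1.1 - x.1.2.2‖ = ‖x.2.1 - x.2.2.2‖}

/-- The additive energy `E₊(A)`. -/
def Eadd (A : Set ℂ) : ℕ :=
  Set.ncard {x : ℂ × ℂ × ℂ × ℂ | x.1 ∈ A ∧ x.2.1 ∈ A ∧ x.2.2.1 ∈ A ∧ x.2.2.2 ∈ A ∧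
    x.1 + x.2.1 = x.2.2.1 + x.2.2.2}

/-- The multiplicative energy `E_×(A)`. -/
def Emul (A : Set ℂ) : ℕ :=
  Set.ncard {x : ℂ × ℂ × ℂ × ℂ | x.1 ∈ A ∧ x.2.1 ∈ A ∧ x.2.2.1 ∈ A ∧ x.2.2.2 ∈ A ∧
    x.1 * x.2.1 = x.2.2.1 * x.2.2.2}

/-- The group energy `E(S)` of a set of affine transformations. -/
def gEnergy (S : Set (ℂ × ℂ)) : ℕ :=
  Set.ncard {x : (ℂ × ℂ) × (ℂ × ℂ) × (ℂ × ℂ) × (ℂ × ℂ) |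
    x.1 ∈ S ∧ x.2.1 ∈ S ∧ x.2.2.1 ∈ S ∧ x.2.2.2 ∈ S ∧
    aMul x.1 (aInv x.2.1) = aMul x.2.2.1 (aInv x.2.2.2)}

/-- The richness `|P ∩ θ·P|` of a motion `θ` with respect to `P`. -/
def rich (P : Finset ℂ) (θ : ℂ × ℂ) : ℕ :=
  Set.ncard ((P : Set ℂ) ∩ (aAct θ '' (P : Set ℂ)))

/-- The set `S_{≥k}(P)` of at-least-`k`-rich rigid motions. -/
def Sk (P : Finset ℂ) (k : ℕ) : Set (ℂ × ℂ) := {θ | θ ∈ SE2 ∧ k ≤ rich P θ}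

/-- The line `{a + t b : t ∈ ℝ}`. -/
def lineThrough (a b : ℂ) : Set ℂ := {z | ∃ t : ℝ, z = a + t * b}

/-- The circle of centre `c₀` and radius `r`. -/
def circleSet (c₀ : ℂ) (r : ℝ) : Set ℂ := {w | ‖w - c₀‖ = r}

namespace Stmt7Aux

def dfun (x : ℂ × ℂ) : ℂ := x.1 - x.2

/-- number of representations of `t` as `a - b`, `a ∈ A`, `b ∈ B`. -/
def rP (A B : Finset ℂ) (t : ℂ) : ℕ := ((A ×ˢ B).filter fun x => dfun x = t).card

/-- the "difference energy" quadruple count. -/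
def EdF (A B C D : Finset ℂ) : Finset ((ℂ × ℂ) × (ℂ × ℂ)) :=
  ((A ×ˢ B) ×ˢ (C ×ˢ D)).filter fun x => dfun x.1 = dfun x.2

lemma pair_count (A B C D : Finset ℂ) (I : Finset ℂ)
    (hI : (A ×ˢ B).image dfun ⊆ I) :
    (EdF A B C D).card = ∑ t ∈ I, rP A B t * rP C D t := by
  rw [Finset.card_eq_sum_card_fiberwise (s := EdF A B C D) (f := fun x => dfun x.1) (t := I)
      (fun x hx => hI (Finset.mem_image.2
        ⟨x.1, (Finset.mem_product.1 (Finset.mem_filter.1 hx).1).1, rfl⟩))]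
  refine Finset.sum_congr rfl fun t ht => ?_
  have h : (EdF A B C D).filter (fun x => dfun x.1 = t)
      = ((A ×ˢ B).filter fun y => dfun y = t) ×ˢ ((C ×ˢ D).filter fun y => dfun y = t) := by
    ext x
    simp only [EdF, Finset.mem_filter, Finset.mem_product]
    constructor
    · rintro ⟨⟨⟨h1, h2⟩, h3⟩, h4⟩
      exact ⟨⟨h1, h4⟩, h2, h4 ▸ h3.symm⟩
    · rintro ⟨⟨h1, h4⟩, h2, h3⟩
      exact ⟨⟨⟨h1, h2⟩, h4.trans h3.symm⟩, h4⟩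
  rw [h, Finset.card_product, rP, rP]


lemma reorder (A B : Finset ℂ) : (EdF A B A B).card = (EdF A A B B).card := by
  refine Finset.card_bij (fun x _ => ((x.1.1, x.2.1), (x.1.2, x.2.2))) ?_ ?_ ?_
  · rintro ⟨⟨a₁, b₁⟩, ⟨a₂, b₂⟩⟩ hx
    simp only [EdF, Finset.mem_filter, Finset.mem_product] at hx ⊢
    simp only [dfun] at hx ⊢
    obtain ⟨⟨⟨h1, h2⟩, h3, h4⟩, h5⟩ := hx
    exact ⟨⟨⟨h1, h3⟩, h2, h4⟩, by linear_combination h5⟩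
  · rintro ⟨⟨a₁, b₁⟩, ⟨a₂, b₂⟩⟩ _ ⟨⟨a₃, b₃⟩, ⟨a₄, b₄⟩⟩ _ h
    simp only [Prod.mk.injEq] at h
    obtain ⟨⟨h1, h2⟩, h3, h4⟩ := h
    simp [h1, h2, h3, h4]
  · rintro ⟨⟨a₁, a₂⟩, ⟨b₁, b₂⟩⟩ hy
    simp only [EdF, Finset.mem_filter, Finset.mem_product] at hy
    simp only [dfun] at hy
    obtain ⟨⟨⟨h1, h2⟩, h3, h4⟩, h5⟩ := hy
    refine ⟨((a₁, b₁), (a₂, b₂)), ?_, rfl⟩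
    simp only [EdF, Finset.mem_filter, Finset.mem_product]
    simp only [dfun]
    exact ⟨⟨⟨h1, h3⟩, h2, h4⟩, by linear_combination h5⟩

lemma scale (P : Finset ℂ) (a : ℂ) (ha : a ≠ 0) :
    (EdF (P.image (a * ·)) (P.image (a * ·)) (P.image (a * ·)) (P.image (a * ·))).card
      = (EdF P P P P).card := by
  refine (Finset.card_bij
    (fun (x : (ℂ × ℂ) × (ℂ × ℂ)) _ => ((a * x.1.1, a * x.1.2), (a * x.2.1, a * x.2.2)))
    ?_ ?_ ?_).symm
  · rintro ⟨⟨p₁, p₂⟩, ⟨p₃, p₄⟩⟩ hx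
    simp only [EdF, Finset.mem_filter, Finset.mem_product, Finset.mem_image] at hx ⊢
    simp only [dfun] at hx ⊢
    obtain ⟨⟨⟨h1, h2⟩, h3, h4⟩, h5⟩ := hx
    exact ⟨⟨⟨⟨p₁, h1, rfl⟩, ⟨p₂, h2, rfl⟩⟩, ⟨p₃, h3, rfl⟩, ⟨p₄, h4, rfl⟩⟩,
      by linear_combination a * h5⟩
  · rintro ⟨⟨p₁, p₂⟩, ⟨p₃, p₄⟩⟩ _ ⟨⟨q₁, q₂⟩, ⟨q₃, q₄⟩⟩ _ h
    simp only [Prod.mk.injEq] at h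
    obtain ⟨⟨h1, h2⟩, h3, h4⟩ := h
    simp [mul_left_cancel₀ ha h1, mul_left_cancel₀ ha h2,
      mul_left_cancel₀ ha h3, mul_left_cancel₀ ha h4]
  · rintro ⟨⟨q₁, q₂⟩, ⟨q₃, q₄⟩⟩ hy
    simp only [EdF, Finset.mem_filter, Finset.mem_product, Finset.mem_image] at hy
    simp only [dfun] at hy
    obtain ⟨⟨⟨⟨p₁, h1, e1⟩, ⟨p₂, h2, e2⟩⟩, ⟨p₃, h3, e3⟩, ⟨p₄, h4, e4⟩⟩, h5⟩ := hy
    refine ⟨((p₁, p₂), (p₃, p₄)), ?_, by simp [e1, e2, e3, e4]⟩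
    simp only [EdF, Finset.mem_filter, Finset.mem_product]
    simp only [dfun]
    refine ⟨⟨⟨h1, h2⟩, h3, h4⟩, ?_⟩
    apply mul_left_cancel₀ ha
    rw [mul_sub, mul_sub, e1, e2, e3, e4]
    exact h5

lemma cs (A B : Finset ℂ) :
    (EdF A B A B).card ^ 2 ≤ (EdF A A A A).card * (EdF B B B B).card := by
  classical
  set I := (A ×ˢ A).image dfun ∪ (B ×ˢ B).image dfun with hI
  rw [reorder, pair_count A A B B I Finset.subset_union_left,
    pair_count A A A A I Finset.subset_union_left,
    pair_count B B B B I Finset.subset_union_right]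
  simpa only [pow_two] using Finset.sum_mul_sq_le_sq_mul_sq I (fun t => rP A A t) (fun t => rP B B t)


lemma eadd_eq (P : Finset ℂ) : Eadd (P : Set ℂ) = (EdF P P P P).card := by
  have hset : {x : ℂ × ℂ × ℂ × ℂ | x.1 ∈ (P : Set ℂ) ∧ x.2.1 ∈ (P : Set ℂ) ∧
      x.2.2.1 ∈ (P : Set ℂ) ∧ x.2.2.2 ∈ (P : Set ℂ) ∧ x.1 + x.2.1 = x.2.2.1 + x.2.2.2}
      = ↑((P ×ˢ P ×ˢ P ×ˢ P).filter fun x => x.1 + x.2.1 = x.2.2.1 + x.2.2.2) := by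
    ext x
    simp [Finset.mem_filter, Finset.mem_product, and_assoc]
  rw [Eadd, hset, Set.ncard_coe_finset]
  refine Finset.card_bij (fun x _ => ((x.1, x.2.2.1), (x.2.2.2, x.2.1))) ?_ ?_ ?_
  · rintro ⟨x₁, x₂, x₃, x₄⟩ hx
    simp only [Finset.mem_filter, Finset.mem_product, EdF] at hx ⊢
    simp only [dfun] at hx ⊢
    obtain ⟨⟨h1, h2, h3, h4⟩, h5⟩ := hx
    exact ⟨⟨⟨h1, h3⟩, h4, h2⟩, by linear_combination h5⟩
  · rintro ⟨x₁, x₂, x₃, x₄⟩ _ ⟨y₁, y₂, y₃, y₄⟩ _ h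
    simp only [Prod.mk.injEq] at h
    obtain ⟨⟨e1, e2⟩, e3, e4⟩ := h
    simp [e1, e2, e3, e4]
  · rintro ⟨⟨a, b⟩, ⟨c, d⟩⟩ hy
    simp only [Finset.mem_filter, Finset.mem_product, EdF] at hy
    simp only [dfun] at hy
    obtain ⟨⟨⟨h1, h2⟩, h3, h4⟩, h5⟩ := hy
    refine ⟨(a, d, b, c), ?_, rfl⟩
    simp only [Finset.mem_filter, Finset.mem_product]
    exact ⟨⟨h1, h4, h2, h3⟩, by linear_combination h5⟩

lemma rich_eq (P : Finset ℂ) (a t : ℂ) :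
    rich P (a, t) = rP P (P.image (a * ·)) t := by
  have hset : (P : Set ℂ) ∩ (aAct (a, t) '' (P : Set ℂ))
      = ↑(P.filter fun z => ∃ p ∈ P, a * p + t = z) := by
    ext z
    simp [aAct, Set.mem_inter_iff, Finset.mem_filter, and_comm]
  rw [rich, hset, Set.ncard_coe_finset, rP]
  refine Finset.card_bij (fun z _ => (z, z - t)) ?_ ?_ ?_
  · rintro z hz
    simp only [Finset.mem_filter, Finset.mem_product, Finset.mem_image] at hz ⊢
    simp only [dfun] at hz ⊢
    obtain ⟨h1, p, hp, hpz⟩ := hz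
    exact ⟨⟨h1, p, hp, by linear_combination hpz⟩, by ring⟩
  · intro z₁ _ z₂ _ h
    exact (Prod.mk.injEq _ _ _ _ ▸ h).1
  · rintro ⟨p, q⟩ hy
    simp only [Finset.mem_filter, Finset.mem_product, Finset.mem_image] at hy
    simp only [dfun] at hy
    obtain ⟨⟨h1, p', hp', hq⟩, h5⟩ := hy
    refine ⟨p, ?_, ?_⟩
    · simp only [Finset.mem_filter]
      exact ⟨h1, p', hp', by linear_combination hq - h5⟩
    · have : q = p - t := by linear_combination -h5
      simp [this]

lemma coset_eq (g : ℂ × ℂ) (hg : g.1 ≠ 0) :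
    aMul g '' U0 = {h : ℂ × ℂ | h.1 = g.1} := by
  ext h
  constructor
  · rintro ⟨u, hu, rfl⟩
    have : u.1 = 1 := hu
    simp [aMul, this]
  · intro hh
    refine ⟨(1, (h.2 - g.2) / g.1), rfl, ?_⟩
    have : g.1 * ((h.2 - g.2) / g.1) + g.2 = h.2 := by field_simp; ring
    simp only [aMul, mul_one, this]
    exact Prod.ext hh.symm rfl

lemma rP_le (P Q : Finset ℂ) (t : ℂ) : rP P Q t ≤ P.card := by
  refine Finset.card_le_card_of_injOn (fun x => x.1) ?_ ?_
  · rintro ⟨p, q⟩ hx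
    exact (Finset.mem_product.1 (Finset.mem_filter.1 hx).1).1
  · rintro ⟨p₁, q₁⟩ h₁ ⟨p₂, q₂⟩ h₂ h
    simp only [Finset.coe_filter, Set.mem_setOf_eq] at h₁ h₂
    dsimp at h
    have e1 := h₁.2
    have e2 := h₂.2
    simp only [dfun] at e1 e2
    have : q₁ = q₂ := by linear_combination e2 - e1 + h
    simp [h, this]

end Stmt7Aux


/-- a rich unipotent coset gives large additive energy. -/
theorem stmt7 (P : Finset ℂ) (C₁ C₂ : ℝ) (hC₁ : 0 < C₁) (hC₂ : 0 < C₂)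
    (S : Finset (ℂ × ℂ)) (hS : (S : Set (ℂ × ℂ)) ⊆ SE2)
    (hrich : ∀ θ ∈ S, C₁ * (P.card : ℝ) ≤ (rich P θ : ℝ))
    (g : ℂ × ℂ) (hg : g ∈ affG)
    (hcoset : C₂ * (P.card : ℝ) ≤ (((aMul g '' U0) ∩ (S : Set (ℂ × ℂ))).ncard : ℝ))
    (hpos : 0 < C₂ * (P.card : ℝ)) :
    C₂ * C₁ ^ 3 * (P.card : ℝ) ^ 3 ≤ (Eadd (P : Set ℂ) : ℝ) := by
  classical
  have ha : g.1 ≠ 0 := hg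
  set n : ℕ := P.card with hn
  set Q : Finset ℂ := P.image (g.1 * ·) with hQ
  set T : Finset (ℂ × ℂ) := S.filter (fun h => h.1 = g.1) with hTdef
  have hcosT : (aMul g '' U0) ∩ (S : Set (ℂ × ℂ)) = ↑T := by
    rw [Stmt7Aux.coset_eq g ha]
    ext h
    simp only [Set.mem_inter_iff, Set.mem_setOf_eq, Finset.coe_filter, hTdef,
      Finset.mem_coe, Finset.mem_filter]
    tauto
  rw [hcosT, Set.ncard_coe_finset] at hcoset
  set D : Finset ℂ := T.image Prod.snd with hDdef
  have hDcard : D.card = T.card := by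
    apply Finset.card_image_of_injOn
    intro h₁ hh₁ h₂ hh₂ he
    have e1 : h₁.1 = g.1 := (Finset.mem_filter.1 hh₁).2
    have e2 : h₂.1 = g.1 := (Finset.mem_filter.1 hh₂).2
    exact Prod.ext (e1.trans e2.symm) he
  have hDrich : ∀ t ∈ D, C₁ * (n : ℝ) ≤ (Stmt7Aux.rP P Q t : ℝ) := by
    intro t ht
    obtain ⟨θ, hθ, hsnd⟩ := Finset.mem_image.1 ht
    have hθS : θ ∈ S := (Finset.mem_filter.1 hθ).1
    have hθ1 : θ.1 = g.1 := (Finset.mem_filter.1 hθ).2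
    have hθeq : θ = (g.1, t) := Prod.ext hθ1 hsnd
    have h := hrich θ hθS
    rwa [hθeq, Stmt7Aux.rich_eq] at h
  have hn0 : (0 : ℝ) < (n : ℝ) := by
    by_contra hcon
    push_neg at hcon
    exact absurd hpos (not_lt.2 (mul_nonpos_of_nonneg_of_nonpos hC₂.le hcon))
  have hTne : T.Nonempty := by
    rw [← Finset.card_pos]
    by_contra hcon
    push_neg at hcon
    interval_cases h : T.card
    · simp at hcoset
      exact absurd (lt_of_lt_of_le hpos hcoset) (lt_irrefl 0)
  have hC1le : C₁ ≤ 1 := by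
    obtain ⟨θ, hθ⟩ := hTne
    have ht : θ.2 ∈ D := Finset.mem_image_of_mem _ hθ
    have h1 := hDrich θ.2 ht
    have h2 : (Stmt7Aux.rP P Q θ.2 : ℝ) ≤ (n : ℝ) := by
      exact_mod_cast Stmt7Aux.rP_le P Q θ.2
    nlinarith
  have hsumcast : ∑ t ∈ D, ((Stmt7Aux.rP P Q t : ℝ)) ^ 2
      = ((∑ t ∈ D, Stmt7Aux.rP P Q t * Stmt7Aux.rP P Q t : ℕ) : ℝ) := by
    push_cast
    exact Finset.sum_congr rfl fun t _ => by ring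
  have hsum1 : C₂ * (n : ℝ) * (C₁ * n) ^ 2 ≤ ∑ t ∈ D, ((Stmt7Aux.rP P Q t : ℝ)) ^ 2 := by
    have e1 : ∀ t ∈ D, (C₁ * (n : ℝ)) ^ 2 ≤ ((Stmt7Aux.rP P Q t : ℝ)) ^ 2 := fun t ht =>
      pow_le_pow_left₀ (by positivity) (hDrich t ht) 2
    calc C₂ * (n : ℝ) * (C₁ * n) ^ 2 ≤ (D.card : ℝ) * (C₁ * n) ^ 2 := by
          apply mul_le_mul_of_nonneg_right _ (by positivity)
          rw [hDcard]; exact hcoset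
      _ = ∑ _t ∈ D, (C₁ * (n : ℝ)) ^ 2 := by rw [Finset.sum_const, nsmul_eq_mul]
      _ ≤ _ := Finset.sum_le_sum e1
  have hsum2 : (∑ t ∈ D, Stmt7Aux.rP P Q t * Stmt7Aux.rP P Q t)
      ≤ (Stmt7Aux.EdF P Q P Q).card := by
    rw [Stmt7Aux.pair_count P Q P Q ((P ×ˢ Q).image Stmt7Aux.dfun ∪ D)
      Finset.subset_union_left]
    exact Finset.sum_le_sum_of_subset Finset.subset_union_right
  have hEd : ((Stmt7Aux.EdF P Q P Q).card : ℝ) ≤ ((Stmt7Aux.EdF P P P P).card : ℝ) := by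
    have h1 := Stmt7Aux.cs P Q
    rw [hQ, Stmt7Aux.scale P g.1 ha, ← pow_two] at h1
    have h2 : ((Stmt7Aux.EdF P Q P Q).card : ℝ) ^ 2
        ≤ ((Stmt7Aux.EdF P P P P).card : ℝ) ^ 2 := by exact_mod_cast h1
    nlinarith [Nat.cast_nonneg (α := ℝ) (Stmt7Aux.EdF P Q P Q).card,
      Nat.cast_nonneg (α := ℝ) (Stmt7Aux.EdF P P P P).card]
  have hfin : ((Stmt7Aux.EdF P P P P).card : ℝ) = (Eadd (P : Set ℂ) : ℝ) := by
    rw [Stmt7Aux.eadd_eq]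
  have hchain : C₂ * (n : ℝ) * (C₁ * n) ^ 2 ≤ (Eadd (P : Set ℂ) : ℝ) := by
    calc C₂ * (n : ℝ) * (C₁ * n) ^ 2 ≤ ∑ t ∈ D, ((Stmt7Aux.rP P Q t : ℝ)) ^ 2 := hsum1
      _ = _ := hsumcast
      _ ≤ ((Stmt7Aux.EdF P Q P Q).card : ℝ) := by exact_mod_cast hsum2
      _ ≤ ((Stmt7Aux.EdF P P P P).card : ℝ) := hEd
      _ = _ := hfin
  calc C₂ * C₁ ^ 3 * (n : ℝ) ^ 3 = (C₂ * (n : ℝ) * (C₁ * n) ^ 2) * C₁ := by ring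
    _ ≤ (C₂ * (n : ℝ) * (C₁ * n) ^ 2) * 1 :=
        mul_le_mul_of_nonneg_left hC1le (by positivity)
    _ = C₂ * (n : ℝ) * (C₁ * n) ^ 2 := mul_one _
    _ ≤ _ := hchain

end
end

section
/- Let P be a finite point set in ℂ and let C₁, C₃ > 0 with C₁|P| ≥ 1. Let S ⊆ SE₂(ℝ) be a finite set such that every θ ∈ S satisfies |P ∩ θ·P| ≥ C₁|P|, and suppose there are g ∈ Aff(ℂ) and z ∈ ℂ with |gT(z) ∩ S| ≥ C₃|P| > 0. Then there exists t ∈ ℂ such that E_×(P − t) ≥ C₃|P|·(C₁|P| − 1)². -/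
open scoped Classical

noncomputable section

/-- pairs (a,b) ∈ X × Y with b = l·a -/
def Fab (X Y : Finset ℂ) (l : ℂ) : Finset (ℂ × ℂ) :=
  (X ×ˢ Y).filter fun p => p.2 = l * p.1

/-- pairs of pairs ((a₁,b₁),(a₂,b₂)) with b₁ a₂ = b₂ a₁ -/
def MM (X Y : Finset ℂ) : Finset ((ℂ × ℂ) × (ℂ × ℂ)) :=
  ((X ×ˢ Y) ×ˢ (X ×ˢ Y)).filter fun x => x.1.2 * x.2.1 = x.2.2 * x.1.1

lemma lam_part (X Y : Finset ℂ) (hX : (0:ℂ) ∉ X) :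
    (MM X Y).card = ∑ l ∈ (X ×ˢ Y).image (fun p => p.2 / p.1), (Fab X Y l).card ^ 2 := by
  have H : ∀ x ∈ MM X Y, x.1.2 / x.1.1 ∈ (X ×ˢ Y).image (fun p => p.2 / p.1) := by
    intro x hx
    simp only [MM, Finset.mem_filter, Finset.mem_product] at hx
    exact Finset.mem_image.2 ⟨x.1, Finset.mem_product.2 hx.1.1, rfl⟩
  rw [Finset.card_eq_sum_card_fiberwise H]
  refine Finset.sum_congr rfl fun l _ => ?_
  have hfib : (MM X Y).filter (fun x => x.1.2 / x.1.1 = l) = (Fab X Y l) ×ˢ (Fab X Y l) := by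
    ext x
    simp only [MM, Fab, Finset.mem_filter, Finset.mem_product]
    constructor
    · rintro ⟨⟨⟨⟨h1, h2⟩, h3, h4⟩, hrel⟩, hdiv⟩
      have hx1 : x.1.1 ≠ 0 := fun h => hX (h ▸ h1)
      have hx2 : x.2.1 ≠ 0 := fun h => hX (h ▸ h3)
      have e1 : x.1.2 = l * x.1.1 := (div_eq_iff hx1).mp hdiv
      have e2 : x.2.2 = l * x.2.1 := by
        have : x.2.2 * x.1.1 = (l * x.2.1) * x.1.1 := by rw [← hrel, e1]; ring
        exact mul_right_cancel₀ hx1 this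
      exact ⟨⟨⟨h1, h2⟩, e1⟩, ⟨h3, h4⟩, e2⟩
    · rintro ⟨⟨⟨h1, h2⟩, e1⟩, ⟨h3, h4⟩, e2⟩
      have hx1 : x.1.1 ≠ 0 := fun h => hX (h ▸ h1)
      refine ⟨⟨⟨⟨h1, h2⟩, h3, h4⟩, by rw [e1, e2]; ring⟩, ?_⟩
      rw [e1, mul_div_assoc, div_self hx1, mul_one]
  rw [hfib, Finset.card_product, sq]

lemma rho_part (X Y : Finset ℂ) (hX : (0:ℂ) ∉ X) :
    (MM X Y).card
      = ∑ r ∈ (X ×ˢ X).image (fun p => p.2 / p.1), (Fab X X r).card * (Fab Y Y r).card := by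
  have H : ∀ x ∈ MM X Y, x.2.1 / x.1.1 ∈ (X ×ˢ X).image (fun p => p.2 / p.1) := by
    intro x hx
    simp only [MM, Finset.mem_filter, Finset.mem_product] at hx
    exact Finset.mem_image.2 ⟨(x.1.1, x.2.1),
      Finset.mem_product.2 ⟨hx.1.1.1, hx.1.2.1⟩, rfl⟩
  rw [Finset.card_eq_sum_card_fiberwise H]
  refine Finset.sum_congr rfl fun r _ => ?_
  rw [← Finset.card_product]
  refine Finset.card_nbij' (fun x => ((x.1.1, x.2.1), (x.1.2, x.2.2)))
    (fun y => ((y.1.1, y.2.1), (y.1.2, y.2.2))) ?_ ?_ ?_ ?_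
  · intro x hx
    simp only [MM, Finset.mem_coe, Finset.mem_filter, Finset.mem_product] at hx
    obtain ⟨⟨⟨⟨h1, h2⟩, h3, h4⟩, hrel⟩, hdiv⟩ := hx
    have hx1 : x.1.1 ≠ 0 := fun h => hX (h ▸ h1)
    have e1 : x.2.1 = r * x.1.1 := (div_eq_iff hx1).mp hdiv
    have e2 : x.2.2 = r * x.1.2 := by
      have : x.2.2 * x.1.1 = (r * x.1.2) * x.1.1 := by rw [← hrel, e1]; ring
      exact mul_right_cancel₀ hx1 this
    simp only [Fab, Finset.mem_coe, Finset.mem_product, Finset.mem_filter]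
    exact ⟨⟨⟨h1, h3⟩, e1⟩, ⟨h2, h4⟩, e2⟩
  · intro y hy
    simp only [Fab, Finset.mem_coe, Finset.mem_product, Finset.mem_filter] at hy
    obtain ⟨⟨hy1, e1⟩, hy2, e2⟩ := hy
    have hx1 : y.1.1 ≠ 0 := fun h => hX (h ▸ hy1.1)
    simp only [MM, Finset.mem_coe, Finset.mem_filter, Finset.mem_product]
    refine ⟨⟨⟨⟨hy1.1, hy2.1⟩, hy1.2, hy2.2⟩, by rw [e1, e2]; ring⟩, ?_⟩
    rw [e1, mul_div_assoc, div_self hx1, mul_one]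
  · intro x _; rfl
  · intro y _; rfl

lemma pad (X Y : Finset ℂ) (hX : (0:ℂ) ∉ X) (L : Finset ℂ) :
    ∑ l ∈ L, (Fab X Y l).card ^ 2 ≤ (MM X Y).card := by
  rw [lam_part X Y hX]
  set I := (X ×ˢ Y).image (fun p => p.2 / p.1) with hI
  have hzero : ∀ l ∈ L, l ∉ L ∩ I → (Fab X Y l).card ^ 2 = 0 := by
    intro l hl hnl
    have hlI : l ∉ I := fun h => hnl (Finset.mem_inter.2 ⟨hl, h⟩)
    rcases Finset.eq_empty_or_nonempty (Fab X Y l) with he | ⟨p, hp⟩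
    · rw [he]; simp
    · exfalso
      simp only [Fab, Finset.mem_filter] at hp
      have hp1 : p.1 ≠ 0 := fun h => hX (h ▸ (Finset.mem_product.1 hp.1).1)
      exact hlI (Finset.mem_image.2 ⟨p, hp.1, by
        rw [hp.2, mul_div_assoc, div_self hp1, mul_one]⟩)
  calc ∑ l ∈ L, (Fab X Y l).card ^ 2
      = ∑ l ∈ L ∩ I, (Fab X Y l).card ^ 2 :=
        (Finset.sum_subset Finset.inter_subset_left hzero).symm
    _ ≤ ∑ l ∈ I, (Fab X Y l).card ^ 2 :=
        Finset.sum_le_sum_of_subset Finset.inter_subset_right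

lemma MM_le_emul (P : Finset ℂ) (t : ℂ) :
    (MM ((P.image (fun p => p - t)).erase 0) ((P.image (fun p => p - t)).erase 0)).card
      ≤ Emul ((fun p => p - t) '' (P : Set ℂ)) := by
  set X := P.image (fun p => p - t) with hXdef
  have hset : {x : ℂ × ℂ × ℂ × ℂ | x.1 ∈ ((fun p => p - t) '' (P : Set ℂ)) ∧
        x.2.1 ∈ ((fun p => p - t) '' (P : Set ℂ)) ∧ x.2.2.1 ∈ ((fun p => p - t) '' (P : Set ℂ)) ∧
        x.2.2.2 ∈ ((fun p => p - t) '' (P : Set ℂ)) ∧ x.1 * x.2.1 = x.2.2.1 * x.2.2.2}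
      = ↑((X ×ˢ X ×ˢ X ×ˢ X).filter fun x => x.1 * x.2.1 = x.2.2.1 * x.2.2.2) := by
    ext x
    simp [hXdef, Set.mem_image, Finset.mem_coe, Finset.mem_filter, Finset.mem_product,
      Finset.mem_image, and_assoc]
  unfold Emul
  rw [hset, Set.ncard_coe_finset]
  refine Finset.card_le_card_of_injOn (fun x => (x.1.2, x.2.1, x.2.2, x.1.1)) ?_ ?_
  · intro x hx
    simp only [MM, Finset.mem_coe, Finset.mem_filter, Finset.mem_product] at hx
    obtain ⟨⟨⟨h1, h2⟩, h3, h4⟩, hrel⟩ := hx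
    simp only [Finset.mem_coe, Finset.mem_filter, Finset.mem_product]
    exact ⟨⟨Finset.mem_of_mem_erase h2, Finset.mem_of_mem_erase h3,
      Finset.mem_of_mem_erase h4, Finset.mem_of_mem_erase h1⟩, hrel⟩
  · intro a _ b _ h
    simp only [Prod.mk.injEq] at h
    obtain ⟨e1, e2, e3, e4⟩ := h
    exact Prod.ext (Prod.ext e4 e1) (Prod.ext e2 e3)

/-- a rich torus coset gives large multiplicative energy. -/
theorem stmt8 (P : Finset ℂ) (C₁ C₃ : ℝ) (hC₁ : 0 < C₁) (hC₃ : 0 < C₃)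
    (hC₁P : 1 ≤ C₁ * (P.card : ℝ))
    (S : Finset (ℂ × ℂ)) (hS : (S : Set (ℂ × ℂ)) ⊆ SE2)
    (hrich : ∀ θ ∈ S, C₁ * (P.card : ℝ) ≤ (rich P θ : ℝ))
    (g : ℂ × ℂ) (hg : g ∈ affG) (z : ℂ)
    (hcoset : C₃ * (P.card : ℝ) ≤ (((aMul g '' stab z) ∩ (S : Set (ℂ × ℂ))).ncard : ℝ))
    (hpos : 0 < C₃ * (P.card : ℝ)) :
    ∃ t : ℂ, C₃ * (P.card : ℝ) * (C₁ * (P.card : ℝ) - 1) ^ 2 ≤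
      (Emul ((fun p => p - t) '' (P : Set ℂ)) : ℝ) := by
  have hg1 : g.1 ≠ 0 := hg
  set n : ℝ := (P.card : ℝ) with hn
  set gz : ℂ := aAct g z with hgzdef
  set A : Finset ℂ := (P.image (fun p => p - z)).erase 0 with hA
  set B : Finset ℂ := (P.image (fun p => p - gz)).erase 0 with hB
  have hA0 : (0:ℂ) ∉ A := by rw [hA]; exact Finset.notMem_erase _ _
  have hB0 : (0:ℂ) ∉ B := by rw [hB]; exact Finset.notMem_erase _ _
  set T : Finset (ℂ × ℂ) := S.filter (fun θ => θ ∈ aMul g '' stab z) with hT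
  have hTset : (aMul g '' stab z) ∩ (S : Set (ℂ × ℂ)) = ↑T := by
    ext x
    simp only [hT, Set.mem_inter_iff, Finset.coe_filter, Set.mem_setOf_eq, Finset.mem_coe]
    tauto
  have hTcard : C₃ * n ≤ (T.card : ℝ) := by
    rwa [hTset, Set.ncard_coe_finset] at hcoset
  have hact : ∀ θ ∈ T, ∀ w, aAct θ w = θ.1 * (w - z) + gz := by
    intro θ hθ w
    obtain ⟨s, hs, rfl⟩ := (Finset.mem_filter.1 hθ).2
    obtain ⟨hs1, hs2⟩ := hs
    rw [hgzdef]
    simp only [aAct, aMul] at hs2 ⊢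
    linear_combination g.1 * hs2
  have hne1 : ∀ θ ∈ T, θ.1 ≠ 0 := by
    intro θ hθ h
    have hmem : θ ∈ SE2 := hS (Finset.mem_coe.2 (Finset.mem_filter.1 hθ).1)
    simp only [SE2, Set.mem_setOf_eq, h, map_zero] at hmem
    norm_num at hmem
  have key1 : ∀ θ ∈ T, C₁ * n ≤ ((Fab A B θ.1).card : ℝ) + 1 := by
    intro θ hθ
    have hθS : θ ∈ S := (Finset.mem_filter.1 hθ).1
    have hθ1 : θ.1 ≠ 0 := hne1 θ hθ
    set R : Finset ℂ := P.filter (fun p => p ∈ aAct θ '' (P : Set ℂ)) with hR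
    have hrichR : (rich P θ : ℝ) = (R.card : ℝ) := by
      rw [rich]
      have hRset : (P : Set ℂ) ∩ (aAct θ '' (P : Set ℂ)) = ↑R := by
        ext p
        simp only [hR, Set.mem_inter_iff, Finset.coe_filter, Set.mem_setOf_eq, Finset.mem_coe]
      rw [hRset, Set.ncard_coe_finset]
    have hcard : R.card ≤ (Fab A B θ.1).card + 1 := by
      have hsub : R ⊆ insert gz (R.erase gz) := by
        intro p hp
        by_cases hpe : p = gz
        · exact hpe ▸ Finset.mem_insert_self _ _
        · exact Finset.mem_insert_of_mem (Finset.mem_erase.2 ⟨hpe, hp⟩)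
      have h2 : (R.erase gz).card ≤ (Fab A B θ.1).card := by
        apply Finset.card_le_card_of_injOn (fun p => ((p - θ.2) / θ.1 - z, p - gz))
        · intro p hp
          have hpgz : p ≠ gz := (Finset.mem_erase.1 hp).1
          have hpR' := Finset.mem_filter.1 (Finset.mem_erase.1 hp).2
          have hpP : p ∈ P := hpR'.1
          obtain ⟨q, hqP, hq⟩ := hpR'.2
          have hqP' : q ∈ P := hqP
          have hq' : (p - θ.2) / θ.1 = q := by
            rw [div_eq_iff hθ1]
            simp only [aAct] at hq
            linear_combination -hq
          have he := hact θ hθ q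
          have hform : p - gz = θ.1 * (q - z) := by linear_combination he - hq
          have hqz : q ≠ z := by
            intro h
            apply hpgz
            rw [h, sub_self, mul_zero] at hform
            exact sub_eq_zero.1 hform
          simp only [hq']
          simp only [Fab, Finset.mem_coe, Finset.mem_filter, Finset.mem_product]
          refine ⟨⟨?_, ?_⟩, hform⟩
          · rw [hA]
            exact Finset.mem_erase.2 ⟨sub_ne_zero.2 hqz, Finset.mem_image.2 ⟨q, hqP', rfl⟩⟩
          · rw [hB]
            exact Finset.mem_erase.2 ⟨sub_ne_zero.2 hpgz, Finset.mem_image.2 ⟨p, hpP, rfl⟩⟩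
        · intro p _ p' _ h
          have h2 := congrArg Prod.snd h
          simpa [sub_left_inj] using h2
      calc R.card ≤ (insert gz (R.erase gz)).card := Finset.card_le_card hsub
        _ ≤ (R.erase gz).card + 1 := Finset.card_insert_le _ _
        _ ≤ (Fab A B θ.1).card + 1 := by omega
    have hr := hrich θ hθS
    rw [hrichR] at hr
    calc C₁ * n ≤ (R.card : ℝ) := hr
      _ ≤ ((Fab A B θ.1).card : ℝ) + 1 := by exact_mod_cast hcard
  have hinj : Set.InjOn Prod.fst (T : Set (ℂ × ℂ)) := by
    intro θ hθ θ' hθ' h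
    have e1 := hact θ (Finset.mem_coe.1 hθ) 0
    have e2 := hact θ' (Finset.mem_coe.1 hθ') 0
    simp only [aAct, mul_zero, zero_add] at e1 e2
    exact Prod.ext h (by rw [e1, e2, h])
  set Λ : Finset ℂ := T.image Prod.fst with hΛ
  have hΛcard : Λ.card = T.card := Finset.card_image_of_injOn hinj
  have hsum : C₃ * n * (C₁ * n - 1) ^ 2 ≤ ∑ l ∈ Λ, ((Fab A B l).card : ℝ) ^ 2 := by
    have hlb : ∀ l ∈ Λ, (C₁ * n - 1) ^ 2 ≤ ((Fab A B l).card : ℝ) ^ 2 := by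
      intro l hl
      obtain ⟨θ, hθ, rfl⟩ := Finset.mem_image.1 hl
      have h1 := key1 θ hθ
      have h0 : (0:ℝ) ≤ C₁ * n - 1 := by linarith
      exact pow_le_pow_left₀ h0 (by linarith) 2
    calc C₃ * n * (C₁ * n - 1) ^ 2 ≤ (T.card : ℝ) * (C₁ * n - 1) ^ 2 :=
          mul_le_mul_of_nonneg_right hTcard (sq_nonneg _)
      _ = (Λ.card : ℝ) * (C₁ * n - 1) ^ 2 := by rw [hΛcard]
      _ ≤ ∑ l ∈ Λ, ((Fab A B l).card : ℝ) ^ 2 := by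
          have h3 := Finset.card_nsmul_le_sum Λ (fun l => ((Fab A B l).card : ℝ) ^ 2)
            ((C₁ * n - 1) ^ 2) hlb
          simpa [nsmul_eq_mul] using h3
  have hAB : ∑ l ∈ Λ, (Fab A B l).card ^ 2 ≤ (MM A B).card := pad A B hA0 Λ
  have hCS : (MM A B).card ^ 2 ≤ (MM A A).card * (MM B B).card := by
    rw [rho_part A B hA0]
    calc (∑ r ∈ (A ×ˢ A).image (fun p => p.2 / p.1), (Fab A A r).card * (Fab B B r).card) ^ 2
        ≤ (∑ r ∈ (A ×ˢ A).image (fun p => p.2 / p.1), (Fab A A r).card ^ 2) *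
          (∑ r ∈ (A ×ˢ A).image (fun p => p.2 / p.1), (Fab B B r).card ^ 2) :=
          Finset.sum_mul_sq_le_sq_mul_sq _ _ _
      _ ≤ (MM A A).card * (MM B B).card :=
          Nat.mul_le_mul (pad A A hA0 _) (pad B B hB0 _)
  have hm_lb : C₃ * n * (C₁ * n - 1) ^ 2 ≤ ((MM A B).card : ℝ) := by
    calc C₃ * n * (C₁ * n - 1) ^ 2 ≤ ∑ l ∈ Λ, ((Fab A B l).card : ℝ) ^ 2 := hsum
      _ = ((∑ l ∈ Λ, (Fab A B l).card ^ 2 : ℕ) : ℝ) := by push_cast; rfl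
      _ ≤ ((MM A B).card : ℝ) := by exact_mod_cast hAB
  have hfinal : (MM A B).card ≤ max (MM A A).card (MM B B).card := by
    have h2 : (MM A B).card ^ 2 ≤ (max (MM A A).card (MM B B).card) ^ 2 := by
      calc (MM A B).card ^ 2 ≤ (MM A A).card * (MM B B).card := hCS
        _ ≤ max (MM A A).card (MM B B).card * max (MM A A).card (MM B B).card :=
            Nat.mul_le_mul (le_max_left _ _) (le_max_right _ _)
        _ = (max (MM A A).card (MM B B).card) ^ 2 := (sq _).symm
    exact (Nat.pow_le_pow_iff_left (by norm_num)).1 h2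
  have hEA : (MM A A).card ≤ Emul ((fun p => p - z) '' (P : Set ℂ)) := MM_le_emul P z
  have hEB : (MM B B).card ≤ Emul ((fun p => p - gz) '' (P : Set ℂ)) := MM_le_emul P gz
  rcases le_total ((MM A A).card) ((MM B B).card) with hle | hle
  · refine ⟨gz, ?_⟩
    have h1 : (MM A B).card ≤ Emul ((fun p => p - gz) '' (P : Set ℂ)) :=
      le_trans (hfinal.trans_eq (max_eq_right hle)) hEB
    calc C₃ * n * (C₁ * n - 1) ^ 2 ≤ ((MM A B).card : ℝ) := hm_lb
      _ ≤ (Emul ((fun p => p - gz) '' (P : Set ℂ)) : ℝ) := by exact_mod_cast h1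
  · refine ⟨z, ?_⟩
    have h1 : (MM A B).card ≤ Emul ((fun p => p - z) '' (P : Set ℂ)) :=
      le_trans (hfinal.trans_eq (max_eq_left hle)) hEA
    calc C₃ * n * (C₁ * n - 1) ^ 2 ≤ ((MM A B).card : ℝ) := hm_lb
      _ ≤ (Emul ((fun p => p - z) '' (P : Set ℂ)) : ℝ) := by exact_mod_cast h1

end
end

section
/- Let P be a finite point set in ℂ, let z ∈ ℂ, let θ ∈ SE₂(ℝ), and let C₁, C₂ > 0. Suppose S ⊆ SE₂(ℝ) is a finite set such that |θ·(T(z) ∩ SE₂(ℝ)) ∩ S| ≥ C₂|P| and every element η ∈ S satisfies |P ∩ η·P| ≥ C₁|P|. Then there exist a constant C₃ > 0 depending only on C₁ and C₂, and a circle γ ⊆ ℂ, such that |P ∩ γ| ≥ C₃|P|. -/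
open scoped Classical

noncomputable section

lemma aAct_aMul (g h : ℂ × ℂ) (q : ℂ) : aAct (aMul g h) q = aAct g (aAct h q) := by
  simp only [aAct, aMul]; ring

lemma aAct_aInv (g : ℂ × ℂ) (hg : g.1 ≠ 0) (q : ℂ) :
    aAct (aInv g) (aAct g q) = q := by
  simp only [aAct, aInv]; field_simp; ring

lemma aAct_aInv' (g : ℂ × ℂ) (hg : g.1 ≠ 0) (p : ℂ) :
    aAct g (aAct (aInv g) p) = p := by
  simp only [aAct, aInv]; field_simp; ring

/-- a rich coset of a torus in `SE₂(ℝ)` gives a rich circle (Prop. 5.2). -/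
theorem stmt12 (C₁ C₂ : ℝ) (hC₁ : 0 < C₁) (hC₂ : 0 < C₂) :
    ∃ C₃ : ℝ, 0 < C₃ ∧
      ∀ (P : Finset ℂ) (z : ℂ) (θ : ℂ × ℂ), θ ∈ SE2 →
        ∀ S : Finset (ℂ × ℂ), (S : Set (ℂ × ℂ)) ⊆ SE2 →
          C₂ * (P.card : ℝ) ≤
            (((aMul θ '' (stab z ∩ SE2)) ∩ (S : Set (ℂ × ℂ))).ncard : ℝ) →
          (∀ η ∈ S, C₁ * (P.card : ℝ) ≤ (rich P η : ℝ)) →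
          ∃ (c₀ : ℂ) (ρ : ℝ), 0 ≤ ρ ∧
            C₃ * (P.card : ℝ) ≤ (((P : Set ℂ) ∩ circleSet c₀ ρ).ncard : ℝ) := by
  refine ⟨min (C₁ * C₂ / 2) (C₁ / 2), by positivity, ?_⟩
  intro P z θ hθ S hS hbig hrich
  set C₃ : ℝ := min (C₁ * C₂ / 2) (C₁ / 2) with hC₃def
  have hC₃pos : 0 < C₃ := by positivity
  set n : ℕ := P.card with hn
  by_cases hsmall : C₁ * n ≤ 2
  · -- small case
    rcases Nat.eq_zero_or_pos n with h0 | h1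
    · refine ⟨0, 0, le_refl 0, ?_⟩
      rw [show ((n : ℝ)) = 0 by exact_mod_cast congrArg Nat.cast h0]
      simpa using Nat.cast_nonneg _
    · obtain ⟨p, hp⟩ := Finset.card_pos.mp h1
      refine ⟨p, 0, le_refl 0, ?_⟩
      have hmem : p ∈ (P : Set ℂ) ∩ circleSet p 0 := by
        refine ⟨hp, ?_⟩
        simp [circleSet]
      have hfin : ((P : Set ℂ) ∩ circleSet p 0).Finite :=
        Set.Finite.inter_of_left (P.finite_toSet) _
      have h1le : 1 ≤ ((P : Set ℂ) ∩ circleSet p 0).ncard :=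
        (Set.ncard_pos hfin).mpr ⟨p, hmem⟩
      have : C₃ * (n : ℝ) ≤ 1 := by
        have : C₃ * n ≤ (C₁ / 2) * n := by
          apply mul_le_mul_of_nonneg_right (min_le_right _ _) (Nat.cast_nonneg _)
        nlinarith
      calc C₃ * (n : ℝ) ≤ 1 := this
        _ ≤ _ := by exact_mod_cast h1le
  · -- main case
    push_neg at hsmall
    have hnpos : 0 < (n : ℝ) := by nlinarith
    set w : ℂ := aAct θ z with hw
    set coset : Set (ℂ × ℂ) := aMul θ '' (stab z ∩ SE2) with hcoset
    have hθ1 : ‖θ.1‖ = 1 := hθ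
    have hθ0 : θ.1 ≠ 0 := by
      intro h; rw [h] at hθ1; simp at hθ1
    -- basic facts about coset elements
    have hne : ∀ η ∈ coset, η.1 ≠ 0 := by
      rintro _ ⟨t, ⟨⟨ht0, _⟩, _⟩, rfl⟩
      exact mul_ne_zero hθ0 ht0
    have hwz : ∀ η ∈ coset, aAct η z = w := by
      rintro _ ⟨t, ⟨⟨_, htz⟩, _⟩, rfl⟩
      rw [aAct_aMul, htz]
    have habs : ∀ η ∈ coset, ∀ q : ℂ,
        ‖aAct η q - w‖ = ‖q - z‖ := by
      rintro _ ⟨t, ⟨⟨ht0, htz⟩, htSE⟩, rfl⟩ q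
      have ht1 : ‖t.1‖ = 1 := htSE
      have htz' : t.1 * z + t.2 = z := htz
      have hdiff : aAct (aMul θ t) q - w = θ.1 * t.1 * (q - z) := by
        simp only [aAct, aMul, hw]
        linear_combination θ.1 * htz'
      rw [hdiff, norm_mul, norm_mul, hθ1, ht1]
      ring
    have hinj : ∀ η₁ ∈ coset, ∀ η₂ ∈ coset, ∀ q : ℂ, q ≠ z →
        aAct η₁ q = aAct η₂ q → η₁ = η₂ := by
      rintro _ ⟨t₁, ⟨⟨h10, h1z⟩, _⟩, rfl⟩ _ ⟨t₂, ⟨⟨h20, h2z⟩, _⟩, rfl⟩ q hq heq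
      rw [aAct_aMul, aAct_aMul] at heq
      have h1 : aAct t₁ q = aAct t₂ q := by
        have := add_right_cancel (heq : θ.1 * aAct t₁ q + θ.2 = θ.1 * aAct t₂ q + θ.2)
        exact mul_left_cancel₀ hθ0 this
      have e1 : t₁.1 * q + t₁.2 = t₂.1 * q + t₂.2 := h1
      have e2 : t₁.1 * z + t₁.2 = t₂.1 * z + t₂.2 := by
        have a1 : t₁.1 * z + t₁.2 = z := h1z
        have a2 : t₂.1 * z + t₂.2 = z := h2z
        rw [a1, a2]
      have ha : t₁.1 = t₂.1 := by
        have hz0 : (t₁.1 - t₂.1) * (q - z) = 0 := by linear_combination e1 - e2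
        rcases mul_eq_zero.mp hz0 with h | h
        · exact sub_eq_zero.mp h
        · exact absurd (sub_eq_zero.mp h) hq
      have hb : t₁.2 = t₂.2 := by linear_combination e2 - z * ha
      have : t₁ = t₂ := Prod.ext ha hb
      rw [this]
    -- finsets
    set K : Finset (ℂ × ℂ) := S.filter (fun η => η ∈ coset) with hK
    have hKsub : ∀ η ∈ K, η ∈ coset := fun η h => (Finset.mem_filter.mp h).2
    have hKS : ∀ η ∈ K, η ∈ S := fun η h => (Finset.mem_filter.mp h).1
    have hKcard : C₂ * (n : ℝ) ≤ (K.card : ℝ) := by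
      have hset : coset ∩ (S : Set (ℂ × ℂ)) = (K : Set (ℂ × ℂ)) := by
        ext x; simp only [Set.mem_inter_iff, hK, Finset.coe_filter, Set.mem_setOf_eq,
          Finset.mem_coe]
        tauto
      rw [hcoset] at hset  -- maybe identity
      calc C₂ * (n : ℝ) ≤ _ := hbig
        _ = (K.card : ℝ) := by rw [hset, Set.ncard_coe_finset]
    set R : (ℂ × ℂ) → Finset ℂ := fun η => P.filter (fun p => ∃ q ∈ P, aAct η q = p) with hR
    have hrichR : ∀ η : ℂ × ℂ, rich P η = (R η).card := by
      intro η
      have : (P : Set ℂ) ∩ (aAct η '' (P : Set ℂ)) = ((R η : Finset ℂ) : Set ℂ) := by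
        ext p
        simp only [Set.mem_inter_iff, Set.mem_image, Finset.mem_coe, hR,
          Finset.mem_filter, Finset.mem_coe]
      rw [rich, this, Set.ncard_coe_finset]
    set fib : ℂ → Finset ℂ :=
      fun q => P.filter (fun p => ‖p - w‖ = ‖q - z‖) with hfib
    -- injection of sigma into sigma
    have hsig : (K.sigma (fun η => (R η).erase w)).card ≤ (P.sigma fib).card := by
      apply Finset.card_le_card_of_injOn
        (fun x => ⟨aAct (aInv x.1) x.2, x.2⟩)
      · rintro ⟨η, p⟩ hx
        simp only [Finset.mem_coe, Finset.mem_sigma, Finset.mem_erase, hR, Finset.mem_filter] at hx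
        obtain ⟨hηK, hpw, hpP, q, hqP, hq⟩ := hx
        have hηc : η ∈ coset := hKsub η hηK
        have hqeq : aAct (aInv η) p = q := by
          rw [← hq, aAct_aInv _ (hne η hηc)]
        simp only [Finset.mem_coe, Finset.mem_sigma, hqeq, hfib, Finset.mem_filter]
        refine ⟨hqP, hpP, ?_⟩
        rw [← hq]
        exact habs η hηc q
      · rintro ⟨η₁, p₁⟩ h₁ ⟨η₂, p₂⟩ h₂ heq
        simp only [Finset.mem_coe, Finset.mem_sigma, Finset.mem_erase, hR,
          Finset.mem_filter] at h₁ h₂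
        obtain ⟨h1K, h1w, h1P, q₁', hq₁P, hq₁⟩ := h₁
        obtain ⟨h2K, h2w, h2P, q₂', hq₂P, hq₂⟩ := h₂
        have hc₁ : η₁ ∈ coset := hKsub η₁ h1K
        have hc₂ : η₂ ∈ coset := hKsub η₂ h2K
        simp only [Sigma.mk.inj_iff, heq_iff_eq] at heq
        obtain ⟨hqeq, hpeq⟩ := heq
        subst hpeq
        have hq1 : aAct η₁ (aAct (aInv η₁) p₁) = p₁ := aAct_aInv' _ (hne η₁ hc₁) p₁
        have hq2 : aAct η₂ (aAct (aInv η₁) p₁) = p₁ := by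
          rw [hqeq]; exact aAct_aInv' _ (hne η₂ hc₂) p₁
        have hqz : aAct (aInv η₁) p₁ ≠ z := by
          intro h
          exact h1w (by rw [← hq1, h]; exact hwz η₁ hc₁)
        have : η₁ = η₂ := hinj η₁ hc₁ η₂ hc₂ _ hqz (hq1.trans hq2.symm)
        rw [this]
    -- sum chain
    have h1 : (K.card : ℝ) * (C₁ * n) ≤ ∑ η ∈ K, ((R η).card : ℝ) := by
      have := Finset.card_nsmul_le_sum K (fun η => ((R η).card : ℝ)) (C₁ * n)
        (fun η hη => by
          show C₁ * (n : ℝ) ≤ ((R η).card : ℝ)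
          rw [← hrichR]; exact hrich η (hKS η hη))
      rwa [nsmul_eq_mul] at this
    have h2 : ∑ η ∈ K, ((R η).card : ℝ) ≤
        (K.card : ℝ) + ∑ η ∈ K, (((R η).erase w).card : ℝ) := by
      have : ∀ η ∈ K, ((R η).card : ℝ) ≤ 1 + (((R η).erase w).card : ℝ) := by
        intro η _
        by_cases hmem : w ∈ R η
        · rw [← Finset.card_erase_add_one hmem]; push_cast; linarith
        · rw [Finset.erase_eq_of_notMem hmem]; linarith
      calc ∑ η ∈ K, ((R η).card : ℝ)
          ≤ ∑ η ∈ K, (1 + (((R η).erase w).card : ℝ)) := Finset.sum_le_sum this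
        _ = (K.card : ℝ) + ∑ η ∈ K, (((R η).erase w).card : ℝ) := by
            rw [Finset.sum_add_distrib, Finset.sum_const, nsmul_eq_mul, mul_one]
    have h3 : ∑ η ∈ K, (((R η).erase w).card : ℝ) =
        ((K.sigma (fun η => (R η).erase w)).card : ℝ) := by
      rw [Finset.card_sigma]; push_cast; rfl
    have h4 : ((P.sigma fib).card : ℝ) = ∑ q ∈ P, ((fib q).card : ℝ) := by
      rw [Finset.card_sigma]; push_cast; rfl
    have hsum : (C₁ * C₂ / 2) * n * n ≤ ∑ q ∈ P, ((fib q).card : ℝ) := by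
      have hsig' : ((K.sigma (fun η => (R η).erase w)).card : ℝ) ≤
          ((P.sigma fib).card : ℝ) := by exact_mod_cast hsig
      have hKnn : (0:ℝ) ≤ K.card := Nat.cast_nonneg _
      nlinarith [h1, h2, h3, h4, hKcard, hsmall, hnpos]
    -- pigeonhole
    have hpig : ∃ q ∈ P, (C₁ * C₂ / 2) * n ≤ ((fib q).card : ℝ) := by
      by_contra hcon
      push_neg at hcon
      have hPne : P.Nonempty := Finset.card_pos.mp (by exact_mod_cast hnpos)
      have : ∑ q ∈ P, ((fib q).card : ℝ) < ∑ _q ∈ P, (C₁ * C₂ / 2) * n :=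
        Finset.sum_lt_sum_of_nonempty hPne (fun q hq => hcon q hq)
      rw [Finset.sum_const, nsmul_eq_mul] at this
      nlinarith
    obtain ⟨q, hqP, hqbound⟩ := hpig
    refine ⟨w, ‖q - z‖, norm_nonneg _, ?_⟩
    have hseteq : (P : Set ℂ) ∩ circleSet w ‖q - z‖ =
        ((fib q : Finset ℂ) : Set ℂ) := by
      ext p
      simp only [Set.mem_inter_iff, Finset.mem_coe, circleSet, Set.mem_setOf_eq,
        hfib, Finset.mem_filter]
    rw [hseteq, Set.ncard_coe_finset]
    calc C₃ * (n : ℝ) ≤ (C₁ * C₂ / 2) * n :=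
          mul_le_mul_of_nonneg_right (min_le_left _ _) (Nat.cast_nonneg _)
      _ ≤ _ := hqbound


end
end
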